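/- For any category of FH models ⟨(K_Φ)_{Φ⊆At}, (f^Φ_Ψ)⟩, the T-transform — defined by taking S_Φ := W_Φ, projections r^Φ_Ψ := f^Φ_Ψ, implicit possibility correspondences Λ*_i(w) := {w' : (w,w') ∈ R_{Φ,i}} for w ∈ S_Φ, awareness functions α_i(w) := S_Υ where Υ = At(A_{Ψ,i}(w)) for w ∈ S_Ψ, and valuation v(p) := ⋃_Φ V_Φ(p) — yields correspondences Λ*_i satisfying Reflexivity, Stationarity, and Projections Preserve Implicit Knowledge, and awareness functions α_i satisfying properties O, I, II, III, and IV of an implicit knowledge-based HMS model. -/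

import Mathlib

/-- The language `L_At`: `φ ::= ⊤ | p | ¬φ | φ∧ψ | ℓ_i φ | a_i φ`
(explicit knowledge is defined: `k_i φ := ℓ_i φ ∧ a_i φ`). -/
inductive Form (At I : Type) : Type
  | top : Form At I
  | atom : At → Form At I
  | neg : Form At I → Form At I
  | conj : Form At I → Form At I → Form At I
  | ell : I → Form At I → Form At I
  | aw : I → Form At I → Form At I

namespace Form

/-- The set of atoms occurring in a formula; `φ ∈ L_Ψ` iff `φ.atoms ⊆ Ψ`. -/
def atoms {At I : Type} : Form At I → Set At
  | top => ∅
  | atom p => {p}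
  | neg φ => φ.atoms
  | conj φ ψ => φ.atoms ∪ ψ.atoms
  | ell _ φ => φ.atoms
  | aw _ φ => φ.atoms

end Form

/-- A partitional, propositionally determined Fagin–Halpern awareness model
for the sublanguage `L_Φ`. -/
structure FHModel (At I : Type) (Φ : Set At) where
  W : Type
  Wne : Nonempty W
  R : I → W → W → Prop
  Aw : I → W → Set (Form At I)
  V : At → Set W
  partitional : ∀ i, Equivalence (R i)
  aw_lang : ∀ i w (φ : Form At I), φ ∈ Aw i w → φ.atoms ⊆ Φ
  propDet : ∀ i w (φ : Form At I), φ.atoms ⊆ Φ →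
      (φ ∈ Aw i w ↔ ∀ p ∈ φ.atoms, Form.atom p ∈ Aw i w)
  knowAware : ∀ i w t, R i w t → Aw i w = Aw i t

/-- Satisfaction in an FH model. -/
def FHModel.sat {At I : Type} {Φ : Set At} (M : FHModel At I Φ) :
    M.W → Form At I → Prop
  | _, .top => True
  | w, .atom p => w ∈ M.V p
  | w, .neg φ => ¬ M.sat w φ
  | w, .conj φ ψ => M.sat w φ ∧ M.sat w ψ
  | w, .ell i φ => ∀ t, M.R i w t → M.sat t φ
  | w, .aw i φ => φ ∈ M.Aw i w

/-- A surjective bounded morphism from the FH model `M` for `Φ` to the FH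
model `N` for `Ψ ⊆ Φ`: surjectivity, atomic harmony, awareness consistency,
homomorphism, and back. -/
def IsBoundedMorphism {At I : Type} {Φ Ψ : Set At} (_hsub : Ψ ⊆ Φ)
    (M : FHModel At I Φ) (N : FHModel At I Ψ) (f : M.W → N.W) : Prop :=
  Function.Surjective f ∧
  (∀ p ∈ Ψ, ∀ w, w ∈ M.V p ↔ f w ∈ N.V p) ∧
  (∀ i w, {φ ∈ M.Aw i w | Form.atoms φ ⊆ Ψ} = N.Aw i (f w)) ∧
  (∀ i w t, M.R i w t → N.R i (f w) (f t)) ∧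
  (∀ i w t', N.R i (f w) t' → ∃ t, f t = t' ∧ M.R i w t)

/-- A category of FH models: one FH model for each `Φ ⊆ At`, together with
commuting surjective bounded morphisms `f^Φ_Ψ` for `Ψ ⊆ Φ`, with `f^Φ_Φ`
the identity. -/
structure FHCategory (At I : Type) where
  K : (Φ : Set At) → FHModel At I Φ
  f : ∀ (Φ Ψ : Set At), Ψ ⊆ Φ → (K Φ).W → (K Ψ).W
  f_bm : ∀ (Φ Ψ : Set At) (h : Ψ ⊆ Φ), IsBoundedMorphism h (K Φ) (K Ψ) (f Φ Ψ h)
  f_id : ∀ (Φ : Set At) (h : Φ ⊆ Φ) (w : (K Φ).W), f Φ Φ h w = w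
  f_comp : ∀ (Φ Ψ Υ : Set At) (h1 : Υ ⊆ Ψ) (h2 : Ψ ⊆ Φ) (w : (K Φ).W),
      f Ψ Υ h1 (f Φ Ψ h2 w) = f Φ Υ (h1.trans h2) w

namespace FHCategory

variable {At I : Type} (C : FHCategory At I)

/-- The state set `Ω` of the T-transform: the disjoint union of the state
spaces `S_Φ := W_Φ`; a state records its space index. -/
def TΩ := Σ Φ : Set At, (C.K Φ).W

open Classical in
/-- The projections `r^Φ_Ψ := f^Φ_Ψ` of the T-transform (total function;
junk value outside the meaningful domain `Ψ ⊆ Φ`). -/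
noncomputable def Tproj (x : C.TΩ) (Ψ : Set At) : C.TΩ :=
  if h : Ψ ⊆ x.1 then ⟨Ψ, C.f x.1 Ψ h x.2⟩ else x

/-- The implicit possibility correspondence of the T-transform:
`w' ∈ Λ*_i(w)` iff `(w, w') ∈ R_{Φ,i}` for `w ∈ S_Φ`. -/
def ΛT (i : I) (x : C.TΩ) : Set C.TΩ :=
  {y | ∃ w' : (C.K x.1).W, (C.K x.1).R i x.2 w' ∧ y = ⟨x.1, w'⟩}

/-- The awareness function of the T-transform: `α_i(w)` is (the space indexed
by) the set of atoms occurring in the awareness set `A_{Ψ,i}(w)`. -/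
def αT (i : I) (x : C.TΩ) : Set At :=
  {p | ∃ φ ∈ (C.K x.1).Aw i x.2, p ∈ Form.atoms φ}

end FHCategory

namespace FHCategory

variable {At I : Type} (C : FHCategory At I)

lemma Tproj_pos (x : C.TΩ) {Ψ : Set At} (h : Ψ ⊆ x.1) :
    C.Tproj x Ψ = ⟨Ψ, C.f x.1 Ψ h x.2⟩ := dif_pos h

/-- αT is contained in the space index. -/
lemma αT_sub (i : I) (x : C.TΩ) : C.αT i x ⊆ x.1 := by
  rintro p ⟨φ, hφ, hp⟩
  exact (C.K x.1).aw_lang i x.2 φ hφ hp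

/-- αT of a projection. -/
lemma αT_proj (i : I) (x : C.TΩ) {Ψ : Set At} (h : Ψ ⊆ x.1) :
    C.αT i (C.Tproj x Ψ) =
      {p | ∃ φ ∈ (C.K x.1).Aw i x.2, Form.atoms φ ⊆ Ψ ∧ p ∈ Form.atoms φ} := by
  rw [C.Tproj_pos x h]
  have hc := (C.f_bm x.1 Ψ h).2.2.1 i x.2
  ext p
  constructor
  · rintro ⟨φ, hφ, hp⟩
    rw [← hc] at hφ
    exact ⟨φ, hφ.1, hφ.2, hp⟩
  · rintro ⟨φ, hφ, hsub, hp⟩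
    have hmem : φ ∈ (C.K Ψ).Aw i (C.f x.1 Ψ h x.2) := by
      rw [← hc]; exact ⟨hφ, hsub⟩
    exact ⟨φ, hmem, hp⟩

end FHCategory

/-- the T-transform of a category of FH models yields implicit
possibility correspondences `Λ*_i` satisfying Reflexivity, Stationarity, and
Projections Preserve Implicit Knowledge, and awareness functions `α_i`
satisfying properties O, I, II, III, and IV of an implicit knowledge-based
HMS model. -/
theorem stmt19 {At I : Type} (C : FHCategory At I) (i : I) :
    -- Reflexivity
    (∀ x : C.TΩ, x ∈ C.ΛT i x) ∧
    -- Stationarity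
    (∀ x y : C.TΩ, y ∈ C.ΛT i x → C.ΛT i y = C.ΛT i x) ∧
    -- Projections Preserve Implicit Knowledge: (Λ*_i(ω))_Ψ = Λ*_i(ω_Ψ)
    (∀ (x : C.TΩ) (Ψ : Set At), Ψ ⊆ x.1 →
      (fun y => C.Tproj y Ψ) '' (C.ΛT i x) = C.ΛT i (C.Tproj x Ψ)) ∧
    -- O: α_i(ω) ⪯ S_ω
    (∀ x : C.TΩ, C.αT i x ⊆ x.1) ∧
    -- I: α_i constant on Λ*_i-cells
    (∀ x y : C.TΩ, y ∈ C.ΛT i x → C.αT i y = C.αT i x) ∧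
    -- II: if S_Ψ ⪯ α_i(ω) then α_i(ω_Ψ) = S_Ψ
    (∀ (x : C.TΩ) (Ψ : Set At), Ψ ⊆ C.αT i x → C.αT i (C.Tproj x Ψ) = Ψ) ∧
    -- III: if α_i(ω) ⪯ S_Ψ ⪯ S_ω then α_i(ω_Ψ) = α_i(ω)
    (∀ (x : C.TΩ) (Ψ : Set At), C.αT i x ⊆ Ψ → Ψ ⊆ x.1 →
      C.αT i (C.Tproj x Ψ) = C.αT i x) ∧
    -- IV: α_i(ω) ⪰ α_i(ω_Ψ)
    (∀ (x : C.TΩ) (Ψ : Set At), Ψ ⊆ x.1 → C.αT i (C.Tproj x Ψ) ⊆ C.αT i x) := by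
  refine ⟨?_, ?_, ?_, C.αT_sub i, ?_, ?_, ?_, ?_⟩
  · -- Reflexivity
    intro x
    exact ⟨x.2, ((C.K x.1).partitional i).refl x.2, (Sigma.eta x).symm⟩
  · -- Stationarity
    rintro x y ⟨w', hR, rfl⟩
    have he := (C.K x.1).partitional i
    ext z
    constructor
    · rintro ⟨v, hv, rfl⟩
      exact ⟨v, he.trans hR hv, rfl⟩
    · rintro ⟨v, hv, rfl⟩
      exact ⟨v, he.trans (he.symm hR) hv, rfl⟩
  · -- PPIK
    intro x Ψ h
    rw [C.Tproj_pos x h]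
    ext z
    constructor
    · rintro ⟨y, ⟨w', hR, rfl⟩, rfl⟩
      refine ⟨C.f x.1 Ψ h w', (C.f_bm x.1 Ψ h).2.2.2.1 i x.2 w' hR, ?_⟩
      exact C.Tproj_pos ⟨x.1, w'⟩ h
    · rintro ⟨t', hR, rfl⟩
      obtain ⟨t, ht, hRt⟩ := (C.f_bm x.1 Ψ h).2.2.2.2 i x.2 t' hR
      refine ⟨⟨x.1, t⟩, ⟨t, hRt, rfl⟩, ?_⟩
      show C.Tproj ⟨x.1, t⟩ Ψ = _
      rw [C.Tproj_pos ⟨x.1, t⟩ h]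
      simp [ht]
      rfl
  · -- I
    rintro x y ⟨w', hR, rfl⟩
    show C.αT i ⟨x.1, w'⟩ = C.αT i x
    unfold FHCategory.αT
    rw [← (C.K x.1).knowAware i x.2 w' hR]
  · -- II
    intro x Ψ hΨ
    have h : Ψ ⊆ x.1 := hΨ.trans (C.αT_sub i x)
    rw [C.αT_proj i x h]
    apply Set.Subset.antisymm
    · rintro p ⟨φ, _, hsub, hp⟩
      exact hsub hp
    · intro p hp
      obtain ⟨φ, hφ, hpφ⟩ := hΨ hp
      have hφΦ : Form.atoms φ ⊆ x.1 := (C.K x.1).aw_lang i x.2 φ hφ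
      have hatoms := ((C.K x.1).propDet i x.2 φ hφΦ).1 hφ p hpφ
      refine ⟨Form.atom p, hatoms, ?_, ?_⟩
      · intro q hq
        rcases hq with rfl
        exact hp
      · rfl
  · -- III
    intro x Ψ h1 h2
    rw [C.αT_proj i x h2]
    apply Set.Subset.antisymm
    · rintro p ⟨φ, hφ, _, hp⟩
      exact ⟨φ, hφ, hp⟩
    · rintro p ⟨φ, hφ, hp⟩
      have : Form.atoms φ ⊆ Ψ := fun q hq => h1 ⟨φ, hφ, hq⟩
      exact ⟨φ, hφ, this, hp⟩
  · -- IV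
    intro x Ψ h
    rw [C.αT_proj i x h]
    rintro p ⟨φ, hφ, _, hp⟩
    exact ⟨φ, hφ, hp⟩
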